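/- Let m, p be positive integers and let H ⊆ ℂ^{m+p} be a p-dimensional subspace with basis h_1, …, h_p. Define f : ℂ → ℂ by f(s) = det of the (m+p) × (m+p) matrix whose first m rows are γ(s), γ′(s), …, γ^{(m−1)}(s) and whose last p rows are h_1, …, h_p. Then f is a polynomial function of s of degree at most mp, and for every s ∈ ℂ one has f(s) = 0 if and only if dim_ℂ(H ∩ K_m(s)) ≥ 1. Consequently, either H meets K_m(s) nontrivially for every s ∈ ℂ, or H meets K_m(s) nontrivially for at most mp values of s. -/

import Mathlib

/-- The `j`-th derivative of the moment curve `s ↦ (1, s, s², …, s^{N-1})` in `ℂ^N`: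
its `i`-th coordinate is `i·(i-1)⋯(i-j+1) · s^{i-j}`. -/
noncomputable def momentDeriv (N j : ℕ) (s : ℂ) : Fin N → ℂ :=
  fun i => (Nat.descFactorial (i : ℕ) j : ℂ) * s ^ ((i : ℕ) - j)

/-- The osculating `k`-plane `K_k(s)` to the rational normal curve at `s`:
the span of `γ(s), γ'(s), …, γ^{(k-1)}(s)`. -/
noncomputable def oscPlane (N k : ℕ) (s : ℂ) : Submodule ℂ (Fin N → ℂ) :=
  Submodule.span ℂ (Set.range fun j : Fin k => momentDeriv N (j : ℕ) s)

/-- A complex subspace of `ℂ^N` is real if it is stable under coordinatewise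
complex conjugation. -/
def IsRealSubspace {N : ℕ} (H : Submodule ℂ (Fin N → ℂ)) : Prop :=
  ∀ v ∈ H, (fun i => (starRingEnd ℂ) (v i)) ∈ H

private lemma strictMono_fin_val_le' {n N : ℕ} (f : Fin n → Fin N) (hf : StrictMono f)
    (k : Fin n) : (k : ℕ) ≤ (f k : ℕ) := by
  obtain ⟨k, hk⟩ := k
  induction k with
  | zero => simp
  | succ i ih =>
    have hi : i < n := Nat.lt_of_succ_lt hk
    have h1 : (⟨i, hi⟩ : Fin n) < ⟨i + 1, hk⟩ := by simp [Fin.lt_def]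
    have := hf h1
    have := ih hi
    simp only [Fin.lt_def] at this ⊢
    omega

private lemma fin_filter_sum' (m p : ℕ) (F : ℕ → ℕ) :
    ∑ j ∈ Finset.univ.filter (fun j : Fin (m + p) => (j : ℕ) < m), F (j : ℕ)
      = ∑ k ∈ Finset.range m, F k := by
  rw [Finset.sum_filter, Fin.sum_univ_eq_sum_range (fun k => if k < m then F k else 0),
    ← Finset.sum_filter]
  congr 1
  ext k
  simp only [Finset.mem_filter, Finset.mem_range]
  omega

private lemma gauss_split' (m p : ℕ) (hm : 0 < m) (hp : 0 < p) :
    ∑ k ∈ Finset.range (m + p), k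
      = m * p + (∑ k ∈ Finset.range m, k) + ∑ k ∈ Finset.range p, k := by
  rcases m with _ | a; · omega
  rcases p with _ | b; · omega
  have h1 := Finset.sum_range_id_mul_two (a + 1 + (b + 1))
  have h2 := Finset.sum_range_id_mul_two (a + 1)
  have h3 := Finset.sum_range_id_mul_two (b + 1)
  simp only [Nat.succ_sub_one] at h2 h3
  have hs : a + 1 + (b + 1) - 1 = a + b + 1 := by omega
  rw [hs] at h1
  have key : (∑ k ∈ Finset.range (a + 1 + (b + 1)), k) * 2
      = ((a + 1) * (b + 1) + (∑ k ∈ Finset.range (a + 1), k)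
          + ∑ k ∈ Finset.range (b + 1), k) * 2 := by
    rw [h1]
    conv_rhs => rw [Nat.add_mul, Nat.add_mul, h2, h3]
    ring
  omega

private lemma sum_subset_le' (m p : ℕ) (T : Finset (Fin (m + p))) (hm : 0 < m) (hp : 0 < p)
    (hT : T.card = m) :
    ∑ j ∈ T, (j : ℕ) ≤ m * p + ∑ k ∈ Finset.range m, k := by
  have hcompl : Tᶜ.card = p := by
    rw [Finset.card_compl, hT]; simp
  have himg : Finset.univ.image (Tᶜ.orderEmbOfFin hcompl) = Tᶜ := by
    apply Finset.coe_injective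
    rw [Finset.coe_image, Finset.coe_univ, Set.image_univ, Finset.range_orderEmbOfFin]
  have hsum2 : ∑ j ∈ Tᶜ, (j : ℕ)
      = ∑ k : Fin p, ((Tᶜ.orderEmbOfFin hcompl k : Fin (m + p)) : ℕ) := by
    conv_lhs => rw [← himg]
    rw [Finset.sum_image (fun a _ b _ hab => (Tᶜ.orderEmbOfFin hcompl).injective hab)]
  have hlow : ∑ k ∈ Finset.range p, k ≤ ∑ j ∈ Tᶜ, (j : ℕ) := by
    rw [hsum2, ← Fin.sum_univ_eq_sum_range (fun k => k) p]
    exact Finset.sum_le_sum fun k _ =>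
      strictMono_fin_val_le' _ (Tᶜ.orderEmbOfFin hcompl).strictMono k
  have htot : (∑ j ∈ T, (j : ℕ)) + ∑ j ∈ Tᶜ, (j : ℕ) = ∑ k ∈ Finset.range (m + p), k := by
    rw [← Fin.sum_univ_eq_sum_range (fun k => k) (m + p), Finset.sum_add_sum_compl]
  have := gauss_split' m p hm hp
  omega

/-- **The closed-loop characteristic polynomial.** Let `H ⊆ ℂ^{m+p}` be a
`p`-dimensional subspace with basis `h_1, …, h_p`, and let `f(s)` be the determinant
of the `(m+p) × (m+p)` matrix whose first `m` rows are `γ(s), γ'(s), …, γ^{(m-1)}(s)`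
and whose last `p` rows are `h_1, …, h_p`.  Then `f` is a polynomial of degree at most
`m·p`, and `f(s) = 0` if and only if `dim_ℂ(H ∩ K_m(s)) ≥ 1`.  Consequently either `H`
meets `K_m(s)` nontrivially for every `s`, or it does so for at most `m·p` values
of `s`. -/
theorem characteristic_polynomial_of_feedback
    (m p : ℕ) (hm : 0 < m) (hp : 0 < p)
    (H : Submodule ℂ (Fin (m + p) → ℂ)) (hH : Module.finrank ℂ H = p)
    (h : Fin p → (Fin (m + p) → ℂ))
    (hind : LinearIndependent ℂ h) (hspan : Submodule.span ℂ (Set.range h) = H)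
    (f : ℂ → ℂ)
    (hf : ∀ s : ℂ, f s = Matrix.det (Matrix.of fun i j : Fin (m + p) =>
      Fin.addCases (motive := fun _ => ℂ)
        (fun i' : Fin m => momentDeriv (m + p) (i' : ℕ) s j)
        (fun i' : Fin p => h i' j) i)) :
    (∃ q : Polynomial ℂ, q.natDegree ≤ m * p ∧ ∀ s, f s = q.eval s) ∧
    (∀ s : ℂ, f s = 0 ↔ 1 ≤ Module.finrank ℂ ↥(H ⊓ oscPlane (m + p) m s)) ∧
    ((∀ s : ℂ, 1 ≤ Module.finrank ℂ ↥(H ⊓ oscPlane (m + p) m s)) ∨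
      ({s : ℂ | 1 ≤ Module.finrank ℂ ↥(H ⊓ oscPlane (m + p) m s)}.Finite ∧
        {s : ℂ | 1 ≤ Module.finrank ℂ ↥(H ⊓ oscPlane (m + p) m s)}.ncard ≤ m * p)) := by
  classical
  -- the polynomial matrix whose evaluation at `s` is the matrix in `hf`
  set Nmat : Matrix (Fin (m + p)) (Fin (m + p)) (Polynomial ℂ) :=
    Matrix.of fun i j => Fin.addCases (motive := fun _ => Polynomial ℂ)
      (fun i' : Fin m => Polynomial.C ((Nat.descFactorial (j : ℕ) (i' : ℕ) : ℂ))
          * Polynomial.X ^ ((j : ℕ) - (i' : ℕ)))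
      (fun i' : Fin p => Polynomial.C (h i' j)) i with hNmat
  have hentry : ∀ r j : Fin (m + p), Nmat r j =
      if (r : ℕ) < m then Polynomial.C ((Nat.descFactorial (j : ℕ) (r : ℕ) : ℂ))
          * Polynomial.X ^ ((j : ℕ) - (r : ℕ))
      else Polynomial.C (Fin.addCases (motive := fun _ => ℂ)
        (fun _ : Fin m => 0) (fun i' : Fin p => h i' j) r) := by
    intro r j
    induction r using Fin.addCases with
    | left i' => simp [hNmat, Fin.is_lt]
    | right i' => simp [hNmat]
  have heval : ∀ s : ℂ, f s = Polynomial.eval s Nmat.det := by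
    intro s
    rw [hf s, ← Polynomial.coe_evalRingHom, RingHom.map_det]
    congr 1
    ext i j
    induction i using Fin.addCases with
    | left i' => simp [hNmat, momentDeriv]
    | right i' => simp [hNmat]
  have hdeg : Nmat.det.natDegree ≤ m * p := by
    rw [Matrix.det_apply']
    refine Polynomial.natDegree_sum_le_of_forall_le _ _ fun σ _ => ?_
    refine Polynomial.natDegree_mul_le.trans ?_
    rw [Polynomial.natDegree_intCast, zero_add]
    by_cases hz : ∀ i : Fin (m + p),
        ((σ i : Fin (m + p)) : ℕ) < m → ((σ i : Fin (m + p)) : ℕ) ≤ (i : ℕ)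
    · refine (Polynomial.natDegree_prod_le _ _).trans ?_
      have hb : ∀ i : Fin (m + p), (Nmat (σ i) i).natDegree ≤
          (if ((σ i : Fin (m + p)) : ℕ) < m
            then (i : ℕ) - ((σ i : Fin (m + p)) : ℕ) else 0) := by
        intro i
        rw [hentry]
        split
        · exact Polynomial.natDegree_C_mul_X_pow_le _ _
        · simp
      refine (Finset.sum_le_sum fun i _ => hb i).trans ?_
      rw [← Finset.sum_filter]
      set S := Finset.univ.filter
        (fun i : Fin (m + p) => ((σ i : Fin (m + p)) : ℕ) < m) with hS
      have hsub : ∑ i ∈ S, ((i : ℕ) - ((σ i : Fin (m + p)) : ℕ))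
          = (∑ i ∈ S, (i : ℕ)) - ∑ i ∈ S, ((σ i : Fin (m + p)) : ℕ) := by
        refine Finset.sum_tsub_distrib _ fun i hi => ?_
        rw [hS, Finset.mem_filter] at hi
        exact hz i hi.2
      rw [hsub]
      have hσS : ∑ i ∈ S, ((σ i : Fin (m + p)) : ℕ) = ∑ k ∈ Finset.range m, k := by
        rw [← fin_filter_sum' m p (fun k => k)]
        refine Finset.sum_bij (fun i _ => σ i) ?_ ?_ ?_ ?_
        · intro a ha; rw [hS, Finset.mem_filter] at ha
          simp [ha.2]
        · intro a _ b _ hab; exact σ.injective hab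
        · intro b hb
          refine ⟨σ.symm b, ?_, by simp⟩
          rw [hS, Finset.mem_filter]
          simp only [Finset.mem_filter] at hb
          simpa using hb.2
        · intro a _; rfl
      have hcardS : S.card = m := by
        have hc : S.card = (Finset.univ.filter (fun j : Fin (m + p) => (j : ℕ) < m)).card := by
          refine Finset.card_bij (fun i _ => σ i) ?_ ?_ ?_
          · intro a ha; rw [hS, Finset.mem_filter] at ha; simp [ha.2]
          · intro a _ b _ hab; exact σ.injective hab
          · intro b hb
            refine ⟨σ.symm b, ?_, by simp⟩
            rw [hS, Finset.mem_filter]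
            simp only [Finset.mem_filter] at hb
            simpa using hb.2
        rw [hc, Finset.card_eq_sum_ones, fin_filter_sum' m p (fun _ => 1)]
        simp
      have hSle := sum_subset_le' m p S hm hp hcardS
      rw [hσS]
      omega
    · push_neg at hz
      obtain ⟨i0, h1, h2⟩ := hz
      have hzentry : Nmat (σ i0) i0 = 0 := by
        rw [hentry, if_pos h1, Nat.descFactorial_eq_zero_iff_lt.mpr h2]
        simp
      have hzero : (∏ i : Fin (m + p), Nmat (σ i) i) = 0 :=
        Finset.prod_eq_zero (f := fun i => Nmat (σ i) i) (Finset.mem_univ i0) hzentry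
      rw [hzero]
      simp
  -- part 2: vanishing of the determinant detects nontrivial intersection
  have key : ∀ s : ℂ, (f s = 0 ↔ 1 ≤ Module.finrank ℂ ↥(H ⊓ oscPlane (m + p) m s)) := by
    intro s
    set Ms : Matrix (Fin (m + p)) (Fin (m + p)) ℂ := Matrix.of fun i j : Fin (m + p) =>
        Fin.addCases (motive := fun _ => ℂ)
          (fun i' : Fin m => momentDeriv (m + p) (i' : ℕ) s j)
          (fun i' : Fin p => h i' j) i with hMs
    set vm : Fin m → (Fin (m + p) → ℂ) := fun j => momentDeriv (m + p) (j : ℕ) s with hvm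
    have hrow_eq : (fun i => Ms i) ∘ finSumFinEquiv = Sum.elim vm h := by
      funext x
      cases x with
      | inl i' => funext j; simp [hMs, hvm]
      | inr i' => funext j; simp [hMs]
    have hvmind : LinearIndependent ℂ vm := by
      set A : Matrix (Fin m) (Fin m) ℂ :=
        Matrix.of (fun j i : Fin m => ((Nat.descFactorial (i : ℕ) (j : ℕ) : ℕ) : ℂ)
          * s ^ ((i : ℕ) - (j : ℕ))) with hA
      have htri : A.BlockTriangular id := by
        intro i j hij
        simp only [hA, Matrix.of_apply, id] at hij ⊢
        rw [Nat.descFactorial_eq_zero_iff_lt.mpr (by exact_mod_cast hij)]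
        simp
      have hdetA : A.det ≠ 0 := by
        rw [Matrix.det_of_upperTriangular htri]
        apply Finset.prod_ne_zero_iff.mpr
        intro i _
        simp only [hA, Matrix.of_apply, Nat.sub_self, pow_zero, mul_one,
          Nat.descFactorial_self]
        exact_mod_cast Nat.factorial_ne_zero (i : ℕ)
      have hrows : LinearIndependent ℂ (fun j => A j) := by
        change LinearIndependent ℂ A.row
        rw [Matrix.linearIndependent_rows_iff_isUnit, Matrix.isUnit_iff_isUnit_det,
          isUnit_iff_ne_zero]
        exact hdetA
      apply LinearIndependent.of_comp (LinearMap.funLeft ℂ ℂ (Fin.castAdd p))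
      convert hrows with j
      funext i; rfl
    have hunit : IsUnit Ms ↔ Disjoint (Submodule.span ℂ (Set.range vm)) H := by
      rw [← Matrix.linearIndependent_rows_iff_isUnit]
      change LinearIndependent ℂ (fun i => Ms i) ↔ _
      rw [← linearIndependent_equiv finSumFinEquiv (f := fun i => Ms i), hrow_eq,
        linearIndependent_sum]
      simp only [Sum.elim_comp_inl, Sum.elim_comp_inr, hspan]
      tauto
    have hosc : oscPlane (m + p) m s = Submodule.span ℂ (Set.range vm) := rfl
    rw [hf s]
    have h1 : Ms.det = 0 ↔ ¬ IsUnit Ms := by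
      rw [Matrix.isUnit_iff_isUnit_det, isUnit_iff_ne_zero, not_ne_iff]
    rw [h1, hunit, Submodule.one_le_finrank_iff, disjoint_iff, hosc, inf_comm]
  refine ⟨⟨Nmat.det, hdeg, heval⟩, key, ?_⟩
  by_cases hall : ∀ s : ℂ, f s = 0
  · left
    intro s
    exact (key s).mp (hall s)
  · right
    push_neg at hall
    obtain ⟨s0, hs0⟩ := hall
    have hq : Nmat.det ≠ 0 := fun hq0 => hs0 (by rw [heval s0, hq0, Polynomial.eval_zero])
    have hset : {s : ℂ | 1 ≤ Module.finrank ℂ ↥(H ⊓ oscPlane (m + p) m s)}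
        = {s : ℂ | Nmat.det.IsRoot s} := by
      ext s
      simp only [Set.mem_setOf_eq, ← key s, heval s, Polynomial.IsRoot]
    constructor
    · rw [hset]
      exact Polynomial.finite_setOf_isRoot hq
    · rw [hset]
      have h2 : {s : ℂ | Nmat.det.IsRoot s} = ↑Nmat.det.roots.toFinset := by
        ext s
        simp [Polynomial.mem_roots, hq]
      rw [h2, Set.ncard_coe_finset]
      exact le_trans (le_trans (Multiset.toFinset_card_le _)
        (Polynomial.card_roots' _)) hdeg
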